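/- For every integer i ≥ 0, the operator identity x^i D^{i+1} = Σ_{m=0}^i s(i+1, m+1) (Dx)^m D holds on ℂ[X], where s(n,k) are the (signed) Stirling numbers of the first kind. -/

import Mathlib

open Polynomial Finset

/-- Signed Stirling numbers of the first kind. -/
def stirling1 : ℕ → ℕ → ℤ
  | 0, 0 => 1
  | 0, _ + 1 => 0
  | _ + 1, 0 => 0
  | n + 1, k + 1 => stirling1 n k - (n : ℤ) * stirling1 n (k + 1)

/-- `Dx` is the operator `p ↦ D(X * p)` on `ℂ[X]`. -/
noncomputable def Dx (p : ℂ[X]) : ℂ[X] := derivative (X * p)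

lemma stirling1_succ_zero (n : ℕ) : stirling1 (n + 1) 0 = 0 := rfl

lemma stirling1_eq_zero_of_lt : ∀ n k : ℕ, n < k → stirling1 n k = 0
  | 0, _ + 1, _ => rfl
  | n + 1, k + 1, h => by
      rw [stirling1, stirling1_eq_zero_of_lt n k (by omega),
        stirling1_eq_zero_of_lt n (k + 1) (by omega)]
      ring

lemma mul_stirling1_zero (n : ℕ) : (n : ℤ) * stirling1 n 0 = 0 := by
  cases n with
  | zero => simp
  | succ n => simp [stirling1_succ_zero]

lemma sum_stirling1 (N : ℕ) (x : ℤ) :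
    ∑ k ∈ range (N + 1), stirling1 N k * x ^ k = ∏ j ∈ range N, (x - j) := by
  induction N with
  | zero => simp [stirling1]
  | succ N ih =>
    rw [Finset.sum_range_succ' _ (N + 1)]
    have h1 : ∀ k, stirling1 (N + 1) (k + 1) = stirling1 N k - (N : ℤ) * stirling1 N (k + 1) :=
      fun k => rfl
    simp only [h1, stirling1_succ_zero, pow_zero, mul_one, add_zero, sub_mul]
    rw [Finset.sum_sub_distrib]
    have h2 : ∑ k ∈ range (N + 1), stirling1 N k * x ^ (k + 1)
        = x * ∏ j ∈ range N, (x - j) := by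
      rw [← ih, Finset.mul_sum]
      exact Finset.sum_congr rfl fun k _ => by ring
    have e1 : ∑ k ∈ range (N + 1 + 1), stirling1 N k * x ^ k
        = ∑ k ∈ range (N + 1), stirling1 N (k + 1) * x ^ (k + 1) + stirling1 N 0 * x ^ 0 :=
      Finset.sum_range_succ' _ (N + 1)
    have e2 : ∑ k ∈ range (N + 1 + 1), stirling1 N k * x ^ k
        = ∏ j ∈ range N, (x - j) + stirling1 N (N + 1) * x ^ (N + 1) := by
      rw [Finset.sum_range_succ, ih]
    have e3 : ∑ k ∈ range (N + 1), stirling1 N (k + 1) * x ^ (k + 1)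
        = ∏ j ∈ range N, (x - j) - stirling1 N 0 := by
      rw [stirling1_eq_zero_of_lt N (N + 1) (by omega)] at e2
      have := e1.symm.trans e2
      simp only [pow_zero, mul_one, zero_mul, add_zero] at this
      linarith
    have h3 : ∑ k ∈ range (N + 1), (N : ℤ) * stirling1 N (k + 1) * x ^ (k + 1)
        = (N : ℤ) * ∏ j ∈ range N, (x - j) := by
      have : ∑ k ∈ range (N + 1), (N : ℤ) * stirling1 N (k + 1) * x ^ (k + 1)
          = (N : ℤ) * ∑ k ∈ range (N + 1), stirling1 N (k + 1) * x ^ (k + 1) := by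
        rw [Finset.mul_sum]
        exact Finset.sum_congr rfl fun k _ => by ring
      rw [this, e3, mul_sub, mul_stirling1_zero, sub_zero]
    rw [h2, h3, Finset.prod_range_succ]
    ring

lemma cast_descFactorial (n N : ℕ) :
    ((n.descFactorial N : ℕ) : ℤ) = ∏ j ∈ range N, ((n : ℤ) - j) := by
  rcases lt_or_ge n N with h | h
  · rw [Nat.descFactorial_eq_zero_iff_lt.2 h, Nat.cast_zero]
    exact (Finset.prod_eq_zero (Finset.mem_range.2 h) (by ring)).symm
  · rw [Nat.descFactorial_eq_prod_range, Nat.cast_prod]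
    exact Finset.prod_congr rfl fun j hj =>
      Nat.cast_sub (le_of_lt (lt_of_lt_of_le (Finset.mem_range.1 hj) h))

lemma key_int (i n : ℕ) :
    ∑ m ∈ range (i + 1), stirling1 (i + 1) (m + 1) * (n : ℤ) ^ (m + 1)
      = (n.descFactorial (i + 1) : ℤ) := by
  have := sum_stirling1 (i + 1) (n : ℤ)
  rw [Finset.sum_range_succ' _ (i + 1)] at this
  rw [cast_descFactorial]
  simpa [stirling1_succ_zero] using this

lemma key_c (i n : ℕ) :
    ∑ m ∈ range (i + 1), (stirling1 (i + 1) (m + 1) : ℂ) * (n : ℂ) ^ (m + 1)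
      = (n.descFactorial (i + 1) : ℂ) := by
  have h := congrArg (Int.cast : ℤ → ℂ) (key_int i n)
  push_cast at h
  exact h

lemma Dx_monomial (k : ℕ) (c : ℂ) : Dx (monomial k c) = monomial k (((k : ℂ) + 1) * c) := by
  unfold Dx
  rw [X_mul_monomial, derivative_monomial]
  push_cast
  ring_nf

lemma Dx_iter_monomial (m k : ℕ) (c : ℂ) :
    Dx^[m] (monomial k c) = monomial k (((k : ℂ) + 1) ^ m * c) := by
  induction m with
  | zero => simp
  | succ m ih =>
    rw [Function.iterate_succ_apply', ih, Dx_monomial]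
    ring_nf

lemma Dx_add (p q : ℂ[X]) : Dx (p + q) = Dx p + Dx q := by
  simp [Dx, mul_add]

lemma Dx_iter_add (m : ℕ) (p q : ℂ[X]) : Dx^[m] (p + q) = Dx^[m] p + Dx^[m] q := by
  induction m with
  | zero => rfl
  | succ m ih => rw [Function.iterate_succ_apply', ih, Dx_add, Function.iterate_succ_apply',
      Function.iterate_succ_apply']

lemma Dx_iter_zero (m : ℕ) : Dx^[m] (0 : ℂ[X]) = 0 :=
  Function.iterate_fixed (by simp [Dx]) m

lemma deriv_iter_add (k : ℕ) (p q : ℂ[X]) :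
    derivative^[k] (p + q) = derivative^[k] p + derivative^[k] q := by
  induction k with
  | zero => rfl
  | succ k ih => rw [Function.iterate_succ_apply', ih, derivative_add,
      Function.iterate_succ_apply', Function.iterate_succ_apply']

theorem stmt8 (i : ℕ) (p : ℂ[X]) :
    X ^ i * derivative^[i + 1] p =
      ∑ m ∈ range (i + 1),
        (stirling1 (i + 1) (m + 1) : ℂ) • Dx^[m] (derivative p) := by
  induction p using Polynomial.induction_on' with
  | add p q hp hq =>
    rw [deriv_iter_add, mul_add, hp, hq, derivative_add, ← Finset.sum_add_distrib]
    exact Finset.sum_congr rfl fun m _ => by rw [Dx_iter_add, smul_add]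
  | monomial n c =>
    rw [derivative_monomial]
    cases n with
    | zero =>
      have h0 : derivative^[i + 1] (monomial 0 c) = 0 :=
        Polynomial.iterate_derivative_eq_zero
          (lt_of_le_of_lt (natDegree_monomial_le c) (Nat.succ_pos i))
      simp [h0, Dx_iter_zero]
    | succ n' =>
      simp only [Nat.add_sub_cancel, Nat.cast_add, Nat.cast_one]
      have hrhs : ∑ m ∈ range (i + 1),
          (stirling1 (i + 1) (m + 1) : ℂ) • Dx^[m] (monomial n' (c * ((n' : ℂ) + 1)))
          = monomial n' (((n' + 1).descFactorial (i + 1) : ℂ) * c) := by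
        have hc : ∀ m ∈ range (i + 1),
            (stirling1 (i + 1) (m + 1) : ℂ) • Dx^[m] (monomial n' (c * ((n' : ℂ) + 1)))
            = monomial n'
              ((stirling1 (i + 1) (m + 1) : ℂ) * ((n' : ℂ) + 1) ^ (m + 1) * c) := by
          intro m _
          rw [Dx_iter_monomial, smul_monomial, smul_eq_mul]
          congr 1
          ring
        rw [Finset.sum_congr rfl hc, ← map_sum (monomial n'), ← Finset.sum_mul]
        congr 1
        have hk := key_c i (n' + 1)
        push_cast at hk ⊢
        rw [hk]
      rw [hrhs]
      rw [← C_mul_X_pow_eq_monomial, Polynomial.iterate_derivative_C_mul,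
        Polynomial.iterate_derivative_X_pow_eq_natCast_mul]
      rcases le_or_gt (i + 1) (n' + 1) with h | h
      · obtain ⟨j, rfl⟩ : ∃ j, n' = i + j := ⟨n' - i, by omega⟩
        rw [show i + j + 1 - (i + 1) = j from by omega, ← C_mul_X_pow_eq_monomial,
          C_mul, C_eq_natCast, pow_add]
        ring
      · have h0 : (n' + 1).descFactorial (i + 1) = 0 :=
          Nat.descFactorial_eq_zero_iff_lt.2 h
        simp [h0, Nat.sub_eq_zero_of_le (show n' + 1 ≤ i from by omega)]
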